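/- For every real number q > p̲, the function s ↦ 1 − Σ_{i≥1} s_i^{q+1} is ν-integrable on S; in particular Φ(q) is a well-defined finite real number for every q > p̲. -/

import Mathlib

open MeasureTheory Real Set Filter

noncomputable section

/-- Real power with the convention `0 ^ r = 0` for every exponent `r`. -/
def pw (x r : ℝ) : ℝ := if x = 0 then 0 else x ^ r

/-- The state space `S` of ranked mass configurations: nonincreasing nonnegative
sequences with total sum at most `1` (sum condition stated via partial sums). -/
def inS (s : ℕ → ℝ) : Prop :=
  (∀ i, 0 ≤ s i) ∧ (∀ i, s (i + 1) ≤ s i) ∧ ∀ F : Finset ℕ, ∑ i ∈ F, s i ≤ 1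

/-- The configuration `(1, 0, 0, …)`. -/
def oneConf : ℕ → ℝ := fun i => if i = 0 then 1 else 0

/-- A dislocation measure: a measure on sequences, carried by `S`, giving no mass
to `(1,0,…)`, integrating `1 - s₁`, and conserving total mass (carried by
configurations with `Σ sᵢ = 1`). -/
structure IsDislocation (ν : Measure (ℕ → ℝ)) : Prop where
  carried : ν {s | ¬ (inS s ∧ HasSum s 1)} = 0
  no_one : ν {oneConf} = 0
  int_one_sub : ∫⁻ s, ENNReal.ofReal (1 - s 0) ∂ν < ⊤

/-- `p̲ := inf {p ∈ ℝ : ∫_S Σ_{i≥2} sᵢ^{p+1} ν(ds) < ∞}`, as an extended real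
(possibly `-∞`, and `+∞` if no `p` qualifies). -/
def pLow (ν : Measure (ℕ → ℝ)) : EReal :=
  sInf {x : EReal | ∃ p : ℝ, x = (p : EReal) ∧
    ∫⁻ s, ∑' i, ENNReal.ofReal (pw (s (i + 1)) (p + 1)) ∂ν < ⊤}

/-- `Φ(q) := ∫_S (1 - Σ_{i≥1} sᵢ^{q+1}) ν(ds)`. -/
def Phi (ν : Measure (ℕ → ℝ)) (q : ℝ) : ℝ :=
  ∫ s, (1 - ∑' i, pw (s i) (q + 1)) ∂ν

/-! ### Auxiliary lemmas -/

lemma pw_nonneg {x : ℝ} (hx : 0 ≤ x) (r : ℝ) : 0 ≤ pw x r := by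
  rcases eq_or_ne x 0 with h | h
  · simp [pw, h]
  · simp only [pw, if_neg h]
    exact Real.rpow_nonneg hx r

lemma pw_anti {x : ℝ} (hx0 : 0 ≤ x) (hx1 : x ≤ 1) {a b : ℝ} (hab : a ≤ b) :
    pw x b ≤ pw x a := by
  rcases eq_or_ne x 0 with h | h
  · simp [pw, h]
  · simp only [pw, if_neg h]
    exact Real.rpow_le_rpow_of_exponent_ge (hx0.lt_of_ne (Ne.symm h)) hx1 hab

lemma measurable_pw (r : ℝ) : Measurable fun x : ℝ => pw x r := by
  have heq : (fun x : ℝ => pw x r) = fun x =>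
      if x = 0 then 0 else if 0 < x then Real.exp (Real.log x * r)
        else Real.exp (Real.log x * r) * Real.cos (r * π) := by
    funext x
    by_cases h0 : x = 0
    · simp [pw, h0]
    · rcases lt_or_gt_of_ne h0 with h | h
      · simp [pw, h0, h.not_gt, Real.rpow_def_of_neg h]
      · simp [pw, h0, h, Real.rpow_def_of_pos h]
  rw [heq]
  have hs : MeasurableSet {x : ℝ | x = 0} := by
    simp [Set.setOf_eq_eq_singleton]
  refine Measurable.ite hs measurable_const ?_
  refine Measurable.ite measurableSet_Ioi ?_ ?_
  · exact (Real.measurable_log.mul_const r).exp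
  · exact ((Real.measurable_log.mul_const r).exp).mul_const _

lemma inS.le_one {s : ℕ → ℝ} (hs : inS s) (i : ℕ) : s i ≤ 1 := by
  simpa using hs.2.2 {i}

/-- The analytic core: the pointwise bound on the good set. -/
lemma abs_bound {s : ℕ → ℝ} (hs : inS s) (h1 : HasSum s 1) (hne : s ≠ oneConf)
    {r : ℝ} (hsum : Summable fun i => pw (s (i + 1)) r) :
    |1 - ∑' i, pw (s i) r| ≤ max 1 r * (1 - s 0) + 2 * ∑' i, pw (s (i + 1)) r := by
  have hnn := hs.1
  have hdec := hs.2.1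
  have hanti : Antitone s := antitone_nat_of_succ_le hdec
  have hle1 : ∀ i, s i ≤ 1 := hs.le_one
  have h0pos : 0 < s 0 := by
    rcases (hnn 0).lt_or_eq with h | h
    · exact h
    · exfalso
      have hz : ∀ i, s i = 0 := fun i =>
        le_antisymm (by simpa [← h] using hanti (Nat.zero_le i)) (hnn i)
      have : s = fun _ => (0:ℝ) := funext hz
      rw [this] at h1
      exact one_ne_zero (h1.unique hasSum_zero)
  set T := ∑' i, pw (s (i + 1)) r with hT
  have hTnn : 0 ≤ T := tsum_nonneg fun i => pw_nonneg (hnn _) r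
  have hfull : Summable fun i => pw (s i) r := (summable_nat_add_iff 1).mp hsum
  have hsplit : ∑' i, pw (s i) r = pw (s 0) r + T := Summable.tsum_eq_zero_add hfull
  have habs : |1 - ∑' i, pw (s i) r| ≤ |1 - pw (s 0) r| + T := by
    rw [hsplit]
    calc |1 - (pw (s 0) r + T)| = |(1 - pw (s 0) r) + (-T)| := by ring_nf
    _ ≤ |1 - pw (s 0) r| + |-T| := abs_add_le _ _
    _ = |1 - pw (s 0) r| + T := by rw [abs_neg, abs_of_nonneg hTnn]
  have hpw0 : pw (s 0) r = (s 0) ^ r := if_neg h0pos.ne'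
  have hclaim : |1 - pw (s 0) r| ≤ max 1 r * (1 - s 0) + T := by
    rw [hpw0]
    rcases le_or_gt 0 r with hr | hr
    · have hx1 : (s 0) ^ r ≤ 1 := Real.rpow_le_one (hnn 0) (hle1 0) hr
      rw [abs_of_nonneg (by linarith)]
      have key : 1 - (s 0) ^ r ≤ max 1 r * (1 - s 0) := by
        rcases le_total r 1 with hr1 | hr1
        · have hx : s 0 ≤ (s 0) ^ r := by
            calc s 0 = (s 0) ^ (1:ℝ) := (Real.rpow_one _).symm
            _ ≤ (s 0) ^ r := Real.rpow_le_rpow_of_exponent_ge h0pos (hle1 0) hr1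
          nlinarith [le_max_left 1 r, hle1 0]
        · have hb := one_add_mul_self_le_rpow_one_add
            (show (-1:ℝ) ≤ s 0 - 1 by linarith [hnn 0]) hr1
          have he : (1 : ℝ) + (s 0 - 1) = s 0 := by ring
          rw [he] at hb
          nlinarith [le_max_right 1 r, hle1 0]
      linarith
    · have hmax : max 1 r = 1 := max_eq_left (by linarith)
      have hx1 : 1 ≤ (s 0) ^ r :=
        Real.one_le_rpow_of_pos_of_le_one_of_nonpos h0pos (hle1 0) hr.le
      rw [abs_sub_comm, abs_of_nonneg (by linarith)]
      have hs1 : 0 < s 1 := by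
        rcases (hnn 1).lt_or_eq with h | h
        · exact h
        · exfalso
          apply hne
          have hz : ∀ i, s (i + 1) = 0 := fun i =>
            le_antisymm (by simpa [← h] using hanti (Nat.one_le_iff_ne_zero.mpr (Nat.succ_ne_zero i))) (hnn _)
          have htail : ∑' i, s (i + 1) = 0 := by
            simp [funext hz]
          have hss := h1.summable
          have hsum0 : s 0 = 1 := by
            have := Summable.tsum_eq_zero_add hss
            rw [h1.tsum_eq, htail, add_zero] at this
            exact this.symm
          funext i
          cases i with
          | zero => simpa [oneConf] using hsum0
          | succ n => simpa [oneConf] using hz n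
      have hmono : (s 0) ^ r ≤ (s 1) ^ r :=
        Real.antitoneOn_rpow_Ioi_of_exponent_nonpos hr.le
          (Set.mem_Ioi.mpr hs1) (Set.mem_Ioi.mpr h0pos) (hanti (Nat.zero_le 1))
      have hterm : (s 1) ^ r ≤ T := by
        have := Summable.le_tsum hsum 0 (fun j _ => pw_nonneg (hnn _) r)
        simpa [pw, hs1.ne', hT] using this
      rw [hmax]
      linarith [hle1 0]
  linarith

/-- For every `q > p̲`, the function `s ↦ 1 - Σ_{i≥1} sᵢ^{q+1}` is `ν`-integrable
(in particular the series converges `ν`-a.e.), so `Φ(q)` is a well-defined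
finite real number. -/
theorem phi_well_defined (ν : Measure (ℕ → ℝ)) (hν : IsDislocation ν)
    (q : ℝ) (hq : pLow ν < (q : EReal)) :
    (∀ᵐ s ∂ν, Summable fun i => pw (s i) (q + 1)) ∧
      Integrable (fun s => 1 - ∑' i, pw (s i) (q + 1)) ν := by
  obtain ⟨x, hxmem, hxlt⟩ := sInf_lt_iff.mp hq
  obtain ⟨p, rfl, hp⟩ := hxmem
  have hpq : p + 1 ≤ q + 1 := by
    have : p < q := by exact_mod_cast hxlt
    linarith
  have measp : Measurable fun s : ℕ → ℝ => ∑' i, ENNReal.ofReal (pw (s (i + 1)) (p + 1)) :=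
    Measurable.ennreal_tsum fun i =>
      ((measurable_pw (p+1)).comp (measurable_pi_apply (i+1))).ennreal_ofReal
  have measq : Measurable fun s : ℕ → ℝ => ∑' i, ENNReal.ofReal (pw (s i) (q + 1)) :=
    Measurable.ennreal_tsum fun i =>
      ((measurable_pw (q+1)).comp (measurable_pi_apply i)).ennreal_ofReal
  have hcar : ∀ᵐ s ∂ν, inS s ∧ HasSum s 1 := ae_iff.mpr hν.carried
  have hone : ∀ᵐ s ∂ν, s ≠ oneConf := by
    rw [ae_iff]
    have hset : {s : ℕ → ℝ | ¬ s ≠ oneConf} = {oneConf} := by ext s; simp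
    rw [hset]; exact hν.no_one
  have hfin : ∀ᵐ s ∂ν, (∑' i, ENNReal.ofReal (pw (s (i + 1)) (p + 1))) < ⊤ :=
    ae_lt_top measp hp.ne
  -- the key a.e. facts
  have key : ∀ᵐ s ∂ν, (Summable fun i => pw (s i) (q + 1)) ∧
      |1 - ∑' i, pw (s i) (q + 1)| ≤ max 1 (q + 1) * (1 - s 0) +
        2 * (∑' i, ENNReal.ofReal (pw (s (i + 1)) (p + 1))).toReal := by
    filter_upwards [hcar, hone, hfin] with s hc hne hf
    obtain ⟨hs, h1⟩ := hc
    have hsp : Summable fun i => pw (s (i + 1)) (p + 1) := by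
      have h := ENNReal.summable_toReal hf.ne
      exact h.congr fun i => ENNReal.toReal_ofReal (pw_nonneg (hs.1 _) _)
    have hsq : Summable fun i => pw (s (i + 1)) (q + 1) :=
      Summable.of_nonneg_of_le (fun i => pw_nonneg (hs.1 _) _)
        (fun i => pw_anti (hs.1 _) (hs.le_one _) hpq) hsp
    have hTle : ∑' i, pw (s (i + 1)) (q + 1) ≤ ∑' i, pw (s (i + 1)) (p + 1) :=
      Summable.tsum_le_tsum (fun i => pw_anti (hs.1 _) (hs.le_one _) hpq) hsq hsp
    have htoReal : (∑' i, ENNReal.ofReal (pw (s (i + 1)) (p + 1))).toReal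
        = ∑' i, pw (s (i + 1)) (p + 1) := by
      rw [← ENNReal.ofReal_tsum_of_nonneg (fun i => pw_nonneg (hs.1 _) _) hsp,
        ENNReal.toReal_ofReal (tsum_nonneg fun i => pw_nonneg (hs.1 _) _)]
    refine ⟨(summable_nat_add_iff 1).mp hsq, ?_⟩
    have hb := abs_bound hs h1 hne hsq
    rw [htoReal]
    linarith
  refine ⟨key.mono fun s h => h.1, ?_⟩
  -- a.e. strong measurability
  have hg : Measurable fun s : ℕ → ℝ =>
      1 - (∑' i, ENNReal.ofReal (pw (s i) (q + 1))).toReal :=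
    measurable_const.sub measq.ennreal_toReal
  have haesm : AEStronglyMeasurable (fun s => 1 - ∑' i, pw (s i) (q + 1)) ν := by
    refine hg.aestronglyMeasurable.congr ?_
    filter_upwards [hcar, key] with s hc hk
    have hnn := hc.1.1
    rw [← ENNReal.ofReal_tsum_of_nonneg (fun i => pw_nonneg (hnn _) _) hk.1,
      ENNReal.toReal_ofReal (tsum_nonneg fun i => pw_nonneg (hnn _) _)]
  refine ⟨haesm, ?_⟩
  rw [hasFiniteIntegral_iff_norm]
  have hmaxnn : (0:ℝ) ≤ max 1 (q + 1) := le_trans zero_le_one (le_max_left _ _)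
  calc ∫⁻ s, ENNReal.ofReal ‖1 - ∑' i, pw (s i) (q + 1)‖ ∂ν
      ≤ ∫⁻ s, (ENNReal.ofReal (max 1 (q + 1)) * ENNReal.ofReal (1 - s 0) +
          2 * ∑' i, ENNReal.ofReal (pw (s (i + 1)) (p + 1))) ∂ν := by
        refine lintegral_mono_ae ?_
        filter_upwards [hcar, key] with s hc hk
        have hs0 : s 0 ≤ 1 := hc.1.le_one 0
        set T := ∑' i, ENNReal.ofReal (pw (s (i + 1)) (p + 1)) with hTdef
        calc ENNReal.ofReal ‖1 - ∑' i, pw (s i) (q + 1)‖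
            = ENNReal.ofReal |1 - ∑' i, pw (s i) (q + 1)| := by rw [Real.norm_eq_abs]
          _ ≤ ENNReal.ofReal (max 1 (q + 1) * (1 - s 0) + 2 * T.toReal) :=
              ENNReal.ofReal_le_ofReal hk.2
          _ ≤ ENNReal.ofReal (max 1 (q + 1)) * ENNReal.ofReal (1 - s 0) + 2 * T := by
              rw [ENNReal.ofReal_add (mul_nonneg hmaxnn (by linarith))
                (by positivity), ENNReal.ofReal_mul hmaxnn,
                ENNReal.ofReal_mul (by norm_num : (0:ℝ) ≤ 2)]
              gcongr
              · rw [ENNReal.ofReal_ofNat]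
              · exact ENNReal.ofReal_toReal_le
    _ = ENNReal.ofReal (max 1 (q + 1)) * (∫⁻ s, ENNReal.ofReal (1 - s 0) ∂ν) +
          2 * ∫⁻ s, ∑' i, ENNReal.ofReal (pw (s (i + 1)) (p + 1)) ∂ν := by
        have h1m : Measurable fun s : ℕ → ℝ => ENNReal.ofReal (1 - s 0) :=
          (measurable_const.sub (measurable_pi_apply 0)).ennreal_ofReal
        rw [lintegral_add_left (h1m.const_mul _), lintegral_const_mul _ h1m,
          lintegral_const_mul _ measp]
    _ < ⊤ := by
        apply ENNReal.add_lt_top.mpr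
        constructor
        · exact ENNReal.mul_lt_top ENNReal.ofReal_lt_top hν.int_one_sub
        · exact ENNReal.mul_lt_top (by norm_num) hp

end
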